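/- Let $\{m_n\}_{n\ge 0}$ be non-decreasing positive integers with $m_0 = d$, $W_n \in \mathbb{R}^{m_n \times m_{n-1}}$, $b_n \in \mathbb{R}^{m_n}$. If $W_n = I_{m_n,m_{n-1}} + P_n$ with $\sum_{n=1}^\infty \|P_n\|_p < \infty$ and $\sum_{n=1}^\infty \|b_n\|_p < \infty$, then the ReLU neural networks $\mathcal{N}_n(x) := \left(\bigodot_{i=1}^n \sigma(W_i \cdot + b_i)\right)(x)$, after zero-padding to elements of $\ell^p$, converge pointwise on $[0,1]^d$: for each $x \in [0,1]^d$, the sequence $\tilde{\mathcal{N}}_n(x) \in \ell^p$ is convergent. -/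

import Mathlib

open scoped ENNReal
open Matrix Filter

noncomputable section


/-- The `m' × m` matrix with the identity on top and zero rows below. -/
def Ipad (m' m : ℕ) : Matrix (Fin m') (Fin m) ℝ :=
  Matrix.of fun i j => if (i : ℕ) = (j : ℕ) then 1 else 0

/-- The diagonal entries of an activation matrix are 0 or 1. -/
def ZeroOne {m : ℕ} (J : Fin m → ℝ) : Prop := ∀ i, J i = 0 ∨ J i = 1

/-- A matrix viewed as a bounded linear operator between `ℓ^p` spaces `ℝ^a → ℝ^b`. -/
def matCLM (p : ℝ≥0∞) [Fact (1 ≤ p)] {a b : ℕ} (A : Matrix (Fin b) (Fin a) ℝ) :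
    PiLp p (fun _ : Fin a => ℝ) →L[ℝ] PiLp p (fun _ : Fin b => ℝ) :=
  LinearMap.toContinuousLinearMap <|
    (WithLp.linearEquiv p ℝ (Fin b → ℝ)).symm.toLinearMap ∘ₗ
      A.mulVecLin ∘ₗ (WithLp.linearEquiv p ℝ (Fin a → ℝ)).toLinearMap

/-- Zero-padding of a finite vector into `ℓ^p`. -/
def padLp (p : ℝ≥0∞) [Fact (1 ≤ p)] {m : ℕ} (x : Fin m → ℝ) : lp (fun _ : ℕ => ℝ) p :=
  ∑ i : Fin m, lp.single p (i : ℕ) (x i)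

/-- Zero-padding as a bounded linear operator `ℝ^m → ℓ^p`. -/
def padCLM (p : ℝ≥0∞) [Fact (1 ≤ p)] (m : ℕ) :
    PiLp p (fun _ : Fin m => ℝ) →L[ℝ] lp (fun _ : ℕ => ℝ) p :=
  LinearMap.toContinuousLinearMap
    { toFun := fun x => padLp p ((WithLp.linearEquiv p ℝ (Fin m → ℝ)) x)
      map_add' := by
        intro x y
        simp only [padLp, WithLp.linearEquiv_apply]
        rw [← Finset.sum_add_distrib]
        refine Finset.sum_congr rfl fun i _ => ?_
        apply lp.ext
        funext j
        by_cases h : j = (i : ℕ)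
        · subst h
          simp [lp.single_apply_self]
        · simp [lp.single_apply_ne p _ _ h]
      map_smul' := by
        intro c x
        simp only [padLp, WithLp.linearEquiv_apply, RingHom.id_apply, Finset.smul_sum]
        refine Finset.sum_congr rfl fun i _ => ?_
        rw [show (WithLp.addEquiv p (Fin m → ℝ)).toFun (c • x) i = c • (WithLp.addEquiv p (Fin m → ℝ)).toFun x i from rfl,
          lp.single_smul] }


/-- Componentwise ReLU. -/
def relu {m : ℕ} (x : Fin m → ℝ) : Fin m → ℝ := fun i => max (x i) 0

/-- The unit cube `[0,1]^d`. -/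
def cube (d : ℕ) : Set (Fin d → ℝ) := {x | ∀ i, x i ∈ Set.Icc (0:ℝ) 1}

variable {m : ℕ → ℕ}

/-- The deep ReLU network `N_n(x) = σ(W_n · + b_n) ∘ ⋯ ∘ σ(W_1 · + b_1) (x)`. -/
def net (W : ∀ n, Matrix (Fin (m (n+1))) (Fin (m n)) ℝ) (b : ∀ n, Fin (m (n+1)) → ℝ)
    (x : Fin (m 0) → ℝ) : ∀ n, Fin (m n) → ℝ
  | 0 => x
  | n+1 => relu (W n *ᵥ net W b x n + b n)

/-- The product `J_n W_n ⋯ J_1 W_1`. -/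
def prodJW (W : ∀ n, Matrix (Fin (m (n+1))) (Fin (m n)) ℝ)
    (J : ∀ n, Fin (m (n+1)) → ℝ) : ∀ n, Matrix (Fin (m n)) (Fin (m 0)) ℝ
  | 0 => 1
  | n+1 => (Matrix.diagonal (J n) * W n) * prodJW W J n

/-- The product `J_{i+t} W_{i+t} ⋯ J_{i+1} W_{i+1}` (product of `t` factors starting at layer `i+1`). -/
def prodJWFrom (W : ∀ n, Matrix (Fin (m (n+1))) (Fin (m n)) ℝ)
    (J : ∀ n, Fin (m (n+1)) → ℝ) (i : ℕ) : ∀ t, Matrix (Fin (m (i+t))) (Fin (m i)) ℝ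
  | 0 => (1 : Matrix (Fin (m i)) (Fin (m i)) ℝ)
  | t+1 => (Matrix.diagonal (J (i+t)) * W (i+t)) * prodJWFrom W J i t

/-- `∑_{i=1}^n (∏_{k=i+1}^n J_k W_k) J_i b_i`, defined by the recursion
`c_0 = 0`, `c_{n+1} = J_{n+1} W_{n+1} c_n + J_{n+1} b_{n+1}`. -/
def biasSum (W : ∀ n, Matrix (Fin (m (n+1))) (Fin (m n)) ℝ)
    (J : ∀ n, Fin (m (n+1)) → ℝ) (b : ∀ n, Fin (m (n+1)) → ℝ) : ∀ n, Fin (m n) → ℝ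
  | 0 => 0
  | n+1 => (Matrix.diagonal (J n) * W n) *ᵥ biasSum W J b n + Matrix.diagonal (J n) *ᵥ b n

/-- Activation domain of a one-layer network. -/
def actDom {a c : ℕ} (J : Fin c → ℝ) (W : Matrix (Fin c) (Fin a) ℝ) (b : Fin c → ℝ) :
    Set (Fin a → ℝ) :=
  {x | ∀ j, (J j = 1 → 0 < (W *ᵥ x + b) j) ∧ (J j ≠ 1 → (W *ᵥ x + b) j ≤ 0)}

/-- Activation domains of a multi-layer network. -/
def actDomMulti (W : ∀ n, Matrix (Fin (m (n+1))) (Fin (m n)) ℝ)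
    (J : ∀ n, Fin (m (n+1)) → ℝ) (b : ∀ n, Fin (m (n+1)) → ℝ) : ℕ → Set (Fin (m 0) → ℝ)
  | 0 => cube (m 0)
  | n+1 => {x ∈ actDomMulti W J b n | net W b x n ∈ actDom (J n) (W n) (b n)}

/-- The Toeplitz matrix of a filter mask `w = (w_0, …, w_s)`. -/
def toep (s mm : ℕ) (w : Fin (s+1) → ℝ) : Matrix (Fin (mm + s)) (Fin mm) ℝ :=
  Matrix.of fun i j =>
    if h : (j : ℕ) ≤ (i : ℕ) ∧ (i : ℕ) - (j : ℕ) ≤ s then w ⟨(i : ℕ) - (j : ℕ), by omega⟩ else 0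

/-- The widths of a CNN: `m_0 = d`, `m_n = m_{n-1} + s_n`. -/
def cnnWidth (d : ℕ) (s : ℕ → ℕ) : ℕ → ℕ
  | 0 => d
  | n+1 => cnnWidth d s n + s n

/-- The CNN: layer `n+1` maps `x ↦ σ(x * w^{(n+1)} + b_{n+1})`. -/
def cnnNet (d : ℕ) (s : ℕ → ℕ) (w : ∀ n, Fin (s n + 1) → ℝ)
    (b : ∀ n, Fin (cnnWidth d s (n+1)) → ℝ) (x : Fin d → ℝ) :
    ∀ n, Fin (cnnWidth d s n) → ℝ
  | 0 => x
  | n+1 => relu (fun i => (toep (s n) (cnnWidth d s n) (w n) *ᵥ cnnNet d s w b x n) i + b n i)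



section Helpers
variable (p : ℝ≥0∞) [Fact (1 ≤ p)]

def fnorm {k : ℕ} (v : Fin k → ℝ) : ℝ := ‖(WithLp.equiv p (Fin k → ℝ)).symm v‖

lemma hp0 : p ≠ 0 := ne_of_gt (lt_of_lt_of_le zero_lt_one Fact.out)

lemma hptr (h : p ≠ ∞) : 0 < p.toReal := ENNReal.toReal_pos (hp0 p) h

lemma padLp_apply {k : ℕ} (x : Fin k → ℝ) (j : ℕ) :
    (padLp p x : ∀ _ : ℕ, ℝ) j = if h : j < k then x ⟨j, h⟩ else 0 := by
  simp only [padLp, lp.coeFn_sum, Finset.sum_apply]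
  by_cases h : j < k
  · rw [dif_pos h, Finset.sum_eq_single_of_mem (⟨j, h⟩ : Fin k) (Finset.mem_univ _)]
    · exact lp.single_apply_self p _ _
    · intro i _ hi
      exact lp.single_apply_ne p _ _ (fun hj => hi (Fin.ext hj.symm))
  · rw [dif_neg h]
    exact Finset.sum_eq_zero fun i _ =>
      lp.single_apply_ne p _ _ (fun hj => h (hj ▸ i.isLt))

lemma padLp_sub {k : ℕ} (x y : Fin k → ℝ) :
    padLp p x - padLp p y = padLp p (x - y) := by
  apply lp.ext
  funext j
  rw [lp.coeFn_sub, Pi.sub_apply, padLp_apply, padLp_apply, padLp_apply]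
  by_cases h : j < k
  · simp [dif_pos h]
  · simp [dif_neg h]

lemma Ipad_mulVec {a c : ℕ} (y : Fin a → ℝ) (i : Fin c) :
    (Ipad c a *ᵥ y) i = if h : (i : ℕ) < a then y ⟨i, h⟩ else 0 := by
  simp only [Ipad, mulVec, dotProduct, Matrix.of_apply]
  by_cases h : (i : ℕ) < a
  · rw [dif_pos h, Finset.sum_eq_single_of_mem (⟨i, h⟩ : Fin a) (Finset.mem_univ _)]
    · simp
    · intro j _ hj
      rw [if_neg, zero_mul]
      exact fun hij => hj (Fin.ext hij.symm)
  · rw [dif_neg h]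
    refine Finset.sum_eq_zero fun j _ => ?_
    rw [if_neg, zero_mul]
    exact fun hij => h (hij ▸ j.isLt)

lemma padLp_Ipad {a c : ℕ} (h : a ≤ c) (y : Fin a → ℝ) :
    padLp p (Ipad c a *ᵥ y) = padLp p y := by
  apply lp.ext
  funext j
  rw [padLp_apply, padLp_apply]
  by_cases hj : j < a
  · rw [dif_pos hj, dif_pos (lt_of_lt_of_le hj h), Ipad_mulVec, dif_pos hj]
  · rw [dif_neg hj]
    by_cases hj' : j < c
    · rw [dif_pos hj', Ipad_mulVec, dif_neg hj]
    · rw [dif_neg hj']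

lemma norm_padLp {k : ℕ} (x : Fin k → ℝ) : ‖padLp p x‖ = fnorm p x := by
  rcases eq_or_ne p ∞ with hp | hp
  · subst hp
    rw [lp.norm_eq_ciSup, fnorm]
    have h1 : ∀ j : ℕ, ‖(padLp ∞ x : ∀ _ : ℕ, ℝ) j‖ ≤
        ‖(WithLp.equiv ∞ (Fin k → ℝ)).symm x‖ := by
      intro j
      rw [padLp_apply]
      by_cases h : j < k
      · rw [dif_pos h]
        simpa [PiLp.norm_eq_ciSup] using
          le_ciSup (Set.Finite.bddAbove (Set.finite_range _))
            (⟨j, h⟩ : Fin k) (f := fun i => ‖((WithLp.equiv ∞ (Fin k → ℝ)).symm x) i‖)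
      · rw [dif_neg h]; simpa using norm_nonneg _
    refine le_antisymm (Real.iSup_le h1 (norm_nonneg _)) ?_
    rw [PiLp.norm_eq_ciSup]
    refine Real.iSup_le (fun i => ?_) (Real.iSup_nonneg fun j => norm_nonneg _)
    have : ((WithLp.equiv ∞ (Fin k → ℝ)).symm x) i = (padLp ∞ x : ∀ _ : ℕ, ℝ) (i : ℕ) := by
      rw [padLp_apply, dif_pos i.isLt]
      rfl
    rw [this]
    exact lp.norm_apply_le_norm ENNReal.top_ne_zero _ _
  · have hpr : 0 < p.toReal := hptr p hp
    set g : ℕ → ℝ := fun j => if h : j < k then x ⟨j, h⟩ else 0 with hg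
    have hpad : padLp p x = ∑ j ∈ Finset.range k, lp.single p j (g j) := by
      rw [padLp, ← Fin.sum_univ_eq_sum_range (fun j => lp.single p j (g j)) k]
      refine Finset.sum_congr rfl fun i _ => ?_
      simp [hg, i.isLt]
    have := lp.norm_sum_single hpr g (Finset.range k)
    rw [← hpad] at this
    have hsum : ∑ j ∈ Finset.range k, ‖g j‖ ^ p.toReal
        = ∑ i : Fin k, ‖x i‖ ^ p.toReal := by
      rw [← Fin.sum_univ_eq_sum_range (fun j => ‖g j‖ ^ p.toReal) k]
      refine Finset.sum_congr rfl fun i _ => ?_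
      simp [hg, i.isLt]
    rw [hsum] at this
    rw [fnorm, PiLp.norm_eq_sum hpr]
    have hx : ∀ i : Fin k, ‖((WithLp.equiv p (Fin k → ℝ)).symm x) i‖ = ‖x i‖ := fun i => rfl
    simp_rw [hx]
    rw [← this, one_div, Real.rpow_rpow_inv (norm_nonneg _) hpr.ne']

lemma fnorm_mono {k : ℕ} {u v : Fin k → ℝ} (h : ∀ i, |u i| ≤ |v i|) :
    fnorm p u ≤ fnorm p v := by
  rcases eq_or_ne p ∞ with hp | hp
  · subst hp
    rw [fnorm, fnorm, PiLp.norm_eq_ciSup, PiLp.norm_eq_ciSup]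
    refine Real.iSup_le (fun i => ?_) (Real.iSup_nonneg fun j => norm_nonneg _)
    refine le_trans ?_ (le_ciSup (Set.Finite.bddAbove (Set.finite_range _)) i)
    simpa [Real.norm_eq_abs] using h i
  · have hpr : 0 < p.toReal := hptr p hp
    rw [fnorm, fnorm, PiLp.norm_eq_sum hpr, PiLp.norm_eq_sum hpr]
    refine Real.rpow_le_rpow (Finset.sum_nonneg fun i _ => Real.rpow_nonneg (norm_nonneg _) _)
      (Finset.sum_le_sum fun i _ => ?_) (by positivity)
    refine Real.rpow_le_rpow (norm_nonneg _) ?_ hpr.le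
    simpa [Real.norm_eq_abs] using h i

lemma fnorm_add_le {k : ℕ} (u v : Fin k → ℝ) :
    fnorm p (u + v) ≤ fnorm p u + fnorm p v := by
  simp only [fnorm, map_add]
  exact norm_add_le _ _

lemma fnorm_neg {k : ℕ} (u : Fin k → ℝ) : fnorm p (-u) = fnorm p u := by
  show ‖(WithLp.linearEquiv p ℝ (Fin k → ℝ)).symm (-u)‖ = ‖(WithLp.linearEquiv p ℝ (Fin k → ℝ)).symm u‖
  rw [map_neg, norm_neg]

lemma fnorm_mulVec_le {a b : ℕ} (A : Matrix (Fin b) (Fin a) ℝ) (v : Fin a → ℝ) :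
    fnorm p (A *ᵥ v) ≤ ‖matCLM p A‖ * fnorm p v := by
  have := (matCLM p A).le_opNorm ((WithLp.equiv p (Fin a → ℝ)).symm v)
  simpa [fnorm, matCLM] using this

lemma fnorm_Ipad {a c : ℕ} (h : a ≤ c) (y : Fin a → ℝ) :
    fnorm p (Ipad c a *ᵥ y) = fnorm p y := by
  rw [← norm_padLp, ← norm_padLp, padLp_Ipad p h]

end Helpers

theorem stmt8 (p : ℝ≥0∞) [Fact (1 ≤ p)] (m : ℕ → ℕ) (hpos : ∀ n, 0 < m n)
    (hmono : ∀ n, m n ≤ m (n+1))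
    (W P : ∀ n, Matrix (Fin (m (n+1))) (Fin (m n)) ℝ)
    (b : ∀ n, Fin (m (n+1)) → ℝ)
    (hW : ∀ n, W n = Ipad (m (n+1)) (m n) + P n)
    (hP : Summable fun n => ‖matCLM p (P n)‖)
    (hb : Summable fun n => ‖(WithLp.equiv p (Fin (m (n+1)) → ℝ)).symm (b n)‖) :
    ∀ x ∈ cube (m 0), ∃ L : lp (fun _ : ℕ => ℝ) p,
      Tendsto (fun n => padLp p (net W b x n)) atTop (nhds L) := by
  intro x hx
  set y : ∀ n, Fin (m n) → ℝ := net W b x with hy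
  have hynn : ∀ n i, 0 ≤ y n i := by
    intro n
    induction n with
    | zero => exact fun i => (hx i).1
    | succ n ih => exact fun i => le_max_right _ _
  set pn : ℕ → ℝ := fun n => ‖matCLM p (P n)‖ with hpn
  set bn : ℕ → ℝ := fun n => fnorm p (b n) with hbn
  have hbsum : Summable bn := hb
  have hpnn : ∀ n, 0 ≤ pn n := fun n => norm_nonneg _
  have hbnn : ∀ n, 0 ≤ bn n := fun n => norm_nonneg _
  have hrec : ∀ n, y (n+1) = relu (W n *ᵥ y n + b n) := fun n => rfl
  have hstep : ∀ n, fnorm p (y (n+1)) ≤ (1 + pn n) * fnorm p (y n) + bn n := by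
    intro n
    have h1 : fnorm p (y (n+1)) ≤ fnorm p (W n *ᵥ y n + b n) := by
      apply fnorm_mono
      intro i
      rw [hrec n]
      show |max ((W n *ᵥ y n + b n) i) 0| ≤ _
      rcases le_total ((W n *ᵥ y n + b n) i) 0 with h | h
      · rw [max_eq_right h]; simpa using abs_nonneg _
      · rw [max_eq_left h]
    have h2 : fnorm p (W n *ᵥ y n + b n) ≤ fnorm p (W n *ᵥ y n) + bn n :=
      fnorm_add_le p _ _
    have h3 : fnorm p (W n *ᵥ y n) ≤ fnorm p (y n) + pn n * fnorm p (y n) := by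
      rw [hW n, Matrix.add_mulVec]
      refine le_trans (fnorm_add_le p _ _) ?_
      exact add_le_add (le_of_eq (fnorm_Ipad p (hmono n) _)) (fnorm_mulVec_le p _ _)
    nlinarith [h1, h2, h3]
  set A := fnorm p x with hA
  have hA0 : 0 ≤ A := norm_nonneg _
  have hbd : ∀ n, fnorm p (y n) ≤
      (A + ∑ k ∈ Finset.range n, bn k) * ∏ k ∈ Finset.range n, (1 + pn k) := by
    intro n
    induction n with
    | zero =>
      simp only [Finset.range_zero, Finset.sum_empty, Finset.prod_empty, add_zero, mul_one]
      exact le_of_eq rfl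
    | succ n ih =>
      have hprod0 : (0:ℝ) ≤ ∏ k ∈ Finset.range n, (1 + pn k) :=
        Finset.prod_nonneg fun k _ => by nlinarith [hpnn k]
      have hprod1 : (1:ℝ) ≤ ∏ k ∈ Finset.range (n+1), (1 + pn k) :=
        le_trans (le_of_eq Finset.prod_const_one.symm)
          (Finset.prod_le_prod (fun k _ => zero_le_one)
            (fun k _ => le_add_of_nonneg_right (hpnn k)))
      calc fnorm p (y (n+1)) ≤ (1 + pn n) * fnorm p (y n) + bn n := hstep n
        _ ≤ (1 + pn n) * ((A + ∑ k ∈ Finset.range n, bn k) *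
              ∏ k ∈ Finset.range n, (1 + pn k)) + bn n := by
            have : (0:ℝ) ≤ 1 + pn n := by nlinarith [hpnn n]
            nlinarith [mul_le_mul_of_nonneg_left ih this]
        _ = (A + ∑ k ∈ Finset.range n, bn k) *
              ∏ k ∈ Finset.range (n+1), (1 + pn k) + bn n := by
            rw [Finset.prod_range_succ]; ring
        _ ≤ (A + ∑ k ∈ Finset.range n, bn k) *
              ∏ k ∈ Finset.range (n+1), (1 + pn k) +
              bn n * ∏ k ∈ Finset.range (n+1), (1 + pn k) := by
            nlinarith [le_mul_of_one_le_right (hbnn n) hprod1]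
        _ = (A + ∑ k ∈ Finset.range (n+1), bn k) *
              ∏ k ∈ Finset.range (n+1), (1 + pn k) := by
            rw [Finset.sum_range_succ]; ring
  set S := ∑' n, pn n with hS
  set B := ∑' n, bn n with hB
  have hB0 : 0 ≤ B := tsum_nonneg hbnn
  set M := (A + B) * Real.exp S with hM
  have hMb : ∀ n, fnorm p (y n) ≤ M := by
    intro n
    refine (hbd n).trans ?_
    have h1 : ∑ k ∈ Finset.range n, bn k ≤ B :=
      Summable.sum_le_tsum _ (fun k _ => hbnn k) hbsum
    have h2 : ∏ k ∈ Finset.range n, (1 + pn k) ≤ Real.exp S := by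
      calc ∏ k ∈ Finset.range n, (1 + pn k)
          ≤ ∏ k ∈ Finset.range n, Real.exp (pn k) := by
            refine Finset.prod_le_prod (fun k _ => by nlinarith [hpnn k]) (fun k _ => ?_)
            have := Real.add_one_le_exp (pn k)
            linarith
        _ = Real.exp (∑ k ∈ Finset.range n, pn k) := by rw [Real.exp_sum]
        _ ≤ Real.exp S := Real.exp_le_exp.2 (Summable.sum_le_tsum _ (fun k _ => hpnn k) hP)
    refine mul_le_mul (add_le_add_right h1 A) h2 ?_ (by linarith)
    exact Finset.prod_nonneg fun k _ => by nlinarith [hpnn k]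
  have hdist : ∀ n, dist (padLp p (y n)) (padLp p (y (n+1))) ≤ pn n * M + bn n := by
    intro n
    rw [dist_eq_norm, ← padLp_Ipad p (hmono n) (y n), padLp_sub, norm_padLp]
    have hrelu : ∀ i : Fin (m (n+1)), (Ipad (m (n+1)) (m n) *ᵥ y n) i =
        max ((Ipad (m (n+1)) (m n) *ᵥ y n) i) 0 := by
      intro i
      rw [max_eq_left]
      rw [Ipad_mulVec]
      by_cases h : (i : ℕ) < m n
      · rw [dif_pos h]; exact hynn n _
      · rw [dif_neg h]
    have h1 : fnorm p (Ipad (m (n+1)) (m n) *ᵥ y n - y (n+1)) ≤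
        fnorm p (Ipad (m (n+1)) (m n) *ᵥ y n - (W n *ᵥ y n + b n)) := by
      apply fnorm_mono
      intro i
      rw [Pi.sub_apply, Pi.sub_apply, hrec n]
      have h := abs_max_sub_max_le_abs ((Ipad (m (n+1)) (m n) *ᵥ y n) i)
        ((W n *ᵥ y n + b n) i) 0
      rw [← hrelu i] at h
      exact h
    refine h1.trans ?_
    have heq : Ipad (m (n+1)) (m n) *ᵥ y n - (W n *ᵥ y n + b n)
        = -(P n *ᵥ y n + b n) := by
      rw [hW n, Matrix.add_mulVec]
      funext i
      simp only [Pi.sub_apply, Pi.add_apply, Pi.neg_apply]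
      ring
    rw [heq, fnorm_neg]
    refine (fnorm_add_le p _ _).trans ?_
    refine add_le_add ((fnorm_mulVec_le p _ _).trans ?_) le_rfl
    exact mul_le_mul_of_nonneg_left (hMb n) (hpnn n)
  have hsd : Summable (fun n => pn n * M + bn n) := (hP.mul_right M).add hbsum
  have hcauchy : CauchySeq (fun n => padLp p (y n)) :=
    cauchySeq_of_dist_le_of_summable _ hdist hsd
  exact cauchySeq_tendsto_of_complete hcauchy


end
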